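/- For all n ≥ 5, the automorphism group of the modified bubble-sort graph of dimension n has order 2n · n!. -/

import Mathlib

open Equiv

/-- The Cayley graph of `Sₙ = Perm (Fin n)` with connection set `S`:
vertices `h, g` are adjacent iff `g * h⁻¹ ∈ S` (for a symmetric identity-free
set `S`, such as a set of transpositions, `fromRel` yields exactly this relation). -/
def Cay (n : ℕ) (S : Set (Equiv.Perm (Fin n))) : SimpleGraph (Equiv.Perm (Fin n)) :=
  SimpleGraph.fromRel (fun h g => g * h⁻¹ ∈ S)

/-- The transposition graph `T(S)` of `S`: vertices `i, j ∈ Fin n` are adjacent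
iff the transposition `swap i j ∈ S`. -/
def TransGraph (n : ℕ) (S : Set (Equiv.Perm (Fin n))) : SimpleGraph (Fin n) :=
  SimpleGraph.fromRel (fun i j => Equiv.swap i j ∈ S)

/-- The automorphism group of a graph, as a subgroup of the symmetric group on
its vertex set. -/
def graphAut {V : Type*} (G : SimpleGraph V) : Subgroup (Equiv.Perm V) where
  carrier := {f | ∀ x y, G.Adj (f x) (f y) ↔ G.Adj x y}
  one_mem' := by intro x y; simp
  mul_mem' := by
    intro a b ha hb x y
    simp only [Equiv.Perm.mul_apply]
    rw [ha, hb]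
  inv_mem' := by
    intro a ha x y
    rw [← ha (a⁻¹ x) (a⁻¹ y)]
    simp

/-- The image `R(Sₙ)` of the right regular representation of `Sₙ` inside `Sym(Sₙ)`:
all permutations of the form `x ↦ x * a`. -/
def Rrep (n : ℕ) : Subgroup (Equiv.Perm (Equiv.Perm (Fin n))) where
  carrier := {f | ∃ a : Equiv.Perm (Fin n), f = Equiv.mulRight a}
  one_mem' := ⟨1, by ext x; simp⟩
  mul_mem' := by
    rintro _ _ ⟨a, rfl⟩ ⟨b, rfl⟩
    exact ⟨b * a, by ext x; simp [mul_assoc]⟩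
  inv_mem' := by
    rintro _ ⟨a, rfl⟩
    exact ⟨a⁻¹, by ext x; simp⟩

/-- The image `λ(Sₙ)` of the left regular representation of `Sₙ` inside `Sym(Sₙ)`:
all permutations of the form `x ↦ b⁻¹ * x`. -/
def LrepAll (n : ℕ) : Subgroup (Equiv.Perm (Equiv.Perm (Fin n))) where
  carrier := {f | ∃ b : Equiv.Perm (Fin n), f = Equiv.mulLeft b⁻¹}
  one_mem' := ⟨1, by ext x; simp⟩
  mul_mem' := by
    rintro _ _ ⟨a, rfl⟩ ⟨b, rfl⟩
    exact ⟨b * a, by ext x; simp [mul_assoc]⟩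
  inv_mem' := by
    rintro _ ⟨a, rfl⟩
    exact ⟨a⁻¹, by ext x; simp⟩

/-- The subgroup `λ(Aut(T(S))) = { x ↦ a⁻¹ * x : a ∈ Aut(T(S)) }` of `Sym(Sₙ)`. -/
def Lrep (n : ℕ) (S : Set (Equiv.Perm (Fin n))) :
    Subgroup (Equiv.Perm (Equiv.Perm (Fin n))) where
  carrier := {f | ∃ a ∈ graphAut (TransGraph n S), f = Equiv.mulLeft a⁻¹}
  one_mem' := ⟨1, one_mem _, by ext x; simp⟩
  mul_mem' := by
    rintro _ _ ⟨a, ha, rfl⟩ ⟨b, hb, rfl⟩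
    exact ⟨b * a, mul_mem hb ha, by ext x; simp [mul_assoc]⟩
  inv_mem' := by
    rintro _ ⟨a, ha, rfl⟩
    exact ⟨a⁻¹, inv_mem ha, by ext x; simp⟩

namespace MBS

open Fin.CommRing


set_option linter.unusedVariables false
set_option linter.dupNamespace false
set_option linter.unusedSectionVars false

variable {n : ℕ}

/-- the adjacent transposition `(i, i+1)` -/
def sw [NeZero n] (i : Fin n) : Equiv.Perm (Fin n) := Equiv.swap i (i + 1)

section FinFacts
variable [NeZero n]

lemma padd (hn : 5 ≤ n) (i : Fin n) {c : ℕ} (h1 : 0 < c) (h2 : c < n) :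
    i + (c : Fin n) ≠ i := by
  intro h
  have h0 : (c : Fin n) = 0 := by
    have h' : i + (c : Fin n) = i + 0 := by simpa using h
    exact add_left_cancel h'
  have := congrArg Fin.val h0
  rw [Fin.val_cast_of_lt h2] at this
  simp at this
  omega

lemma pone (hn : 5 ≤ n) (i : Fin n) : i + 1 ≠ i := by
  have := padd hn i (c := 1) one_pos (by omega)
  simpa using this

lemma ptwo (hn : 5 ≤ n) (i : Fin n) : i + 1 + 1 ≠ i := by
  have h : i + 1 + 1 = i + ((2 : ℕ) : Fin n) := by push_cast; ring
  rw [h]; exact padd hn i (by omega) (by omega)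

lemma pthree (hn : 5 ≤ n) (i : Fin n) : i + 1 + 1 + 1 ≠ i := by
  have h : i + 1 + 1 + 1 = i + ((3 : ℕ) : Fin n) := by push_cast; ring
  rw [h]; exact padd hn i (by omega) (by omega)

lemma pfour (hn : 5 ≤ n) (i : Fin n) : i + 1 + 1 + 1 + 1 ≠ i := by
  have h : i + 1 + 1 + 1 + 1 = i + ((4 : ℕ) : Fin n) := by push_cast; ring
  rw [h]; exact padd hn i (by omega) (by omega)

lemma ne1 (hn : 5 ≤ n) (i : Fin n) : i ≠ i + 1 := fun h => pone hn i h.symm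
lemma ne2 (hn : 5 ≤ n) (i : Fin n) : i ≠ i + 1 + 1 := fun h => ptwo hn i h.symm
lemma ne3 (hn : 5 ≤ n) (i : Fin n) : i ≠ i + 1 + 1 + 1 := fun h => pthree hn i h.symm
lemma ne4 (hn : 5 ≤ n) (i : Fin n) : i ≠ i + 1 + 1 + 1 + 1 := fun h => pfour hn i h.symm

end FinFacts

section SwapFacts
variable [NeZero n]

lemma swap_eval {p q b c : Fin n} (h : Equiv.swap p q b = c) :
    (b = p ∧ c = q) ∨ (b = q ∧ c = p) ∨ (b ≠ p ∧ b ≠ q ∧ c = b) := by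
  rw [Equiv.swap_apply_def] at h
  split_ifs at h with h1 h2 <;> tauto

lemma swap_eq {p q r s : Fin n} (hpq : p ≠ q) (h : Equiv.swap p q = Equiv.swap r s) :
    (p = r ∧ q = s) ∨ (p = s ∧ q = r) := by
  have h1 : Equiv.swap r s p = q := by rw [← h]; simp
  rcases swap_eval h1 with ⟨h2, h3⟩ | ⟨h2, h3⟩ | ⟨h2, h3, h4⟩
  · left; exact ⟨h2, h3⟩
  · right; exact ⟨h2, h3⟩
  · exact absurd h4.symm hpq

lemma sw_left (i : Fin n) : sw i i = i + 1 := Equiv.swap_apply_left _ _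

lemma sw_right (i : Fin n) : sw i (i + 1) = i := Equiv.swap_apply_right _ _

lemma sw_out {i p : Fin n} (h1 : p ≠ i) (h2 : p ≠ i + 1) : sw i p = p :=
  Equiv.swap_apply_of_ne_of_ne h1 h2

lemma sw_eval {l b c : Fin n} (h : sw l b = c) :
    (b = l ∧ c = l + 1) ∨ (b = l + 1 ∧ c = l) ∨ (b ≠ l ∧ b ≠ l + 1 ∧ c = b) :=
  swap_eval h

lemma sw_mul_self (i : Fin n) : sw i * sw i = 1 := Equiv.swap_mul_self _ _

lemma sw_inv (i : Fin n) : (sw i)⁻¹ = sw i := Equiv.swap_inv _ _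

lemma sw_ne_one (hn : 5 ≤ n) (i : Fin n) : sw i ≠ 1 := by
  rw [sw, Ne, Equiv.swap_eq_one_iff]
  exact ne1 hn i

lemma sw_inj (hn : 5 ≤ n) {a b : Fin n} (h : sw a = sw b) : a = b := by
  rcases swap_eq (ne1 hn a) h with ⟨h1, h2⟩ | ⟨h1, h2⟩
  · exact h1
  · exfalso; rw [← h2] at h1; exact ptwo hn a h1.symm

end SwapFacts

section ML
variable [NeZero n]

lemma trio (hn : 5 ≤ n) {l k : Fin n} (hlk_ne : sw l * sw k ≠ 1)
    (h : sw l (k + 1) = k) : False := by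
  rcases sw_eval h with ⟨h1, h2⟩ | ⟨h1, h2⟩ | ⟨h1, h2, h3⟩
  · rw [← h1] at h2; exact ptwo hn k h2.symm
  · cases h2; exact hlk_ne (sw_mul_self _)
  · exact pone hn k h3.symm

/-- Master lemma: classification of solutions of `sw l * sw k = sw j * sw i`. -/
lemma ML (hn : 5 ≤ n) {i j k l : Fin n} (hij : i ≠ j)
    (E : sw l * sw k = sw j * sw i) :
    (l = j ∧ k = i) ∨ (l = i ∧ k = j ∧ j ≠ i + 1 ∧ i ≠ j + 1) := by
  have E1 : ∀ p, sw l (sw k p) = sw j (sw i p) := fun p => by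
    have := Equiv.ext_iff.mp E p
    simpa [Equiv.Perm.mul_apply] using this
  by_cases hki : k = i
  · subst hki
    left
    exact ⟨sw_inj hn (mul_right_cancel E), rfl⟩
  -- k ≠ i
  have hlk_ne : sw l * sw k ≠ 1 := by
    intro h
    rw [E] at h
    have h2 : sw j = (sw i)⁻¹ := eq_inv_of_mul_eq_one_left h
    rw [sw_inv] at h2
    exact hij (sw_inj hn h2).symm
  by_cases hj1 : j = i + 1
  · -- adjacent case j = i+1 : contradiction since k ≠ i
    exfalso
    subst hj1
    by_cases hk1 : k = i + 1
    · subst hk1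
      have h := E1 (i + 1)
      rw [sw_left, sw_right, sw_out (ne1 hn i) (ne2 hn i)] at h
      rcases sw_eval h with ⟨h1, h2⟩ | ⟨h1, h2⟩ | ⟨h1, h2, h3⟩
      · rw [← h1] at h2; exact pthree hn i h2.symm
      · rw [← h2] at h1; exact pone hn (i + 1) h1
      · exact ptwo hn i h3.symm
    · by_cases hk2 : k = i + 1 + 1
      · subst hk2
        have h := E1 (i + 1 + 1)
        rw [sw_left, sw_out (ptwo hn i) (pone hn (i + 1)), sw_right] at h
        rcases sw_eval h with ⟨h1, h2⟩ | ⟨h1, h2⟩ | ⟨h1, h2, h3⟩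
        · rw [← h1] at h2; exact pthree hn (i + 1) h2.symm
        · rw [← h2] at h1; exact pone hn (i + 1 + 1) h1
        · exact ptwo hn (i + 1) h3.symm
      · have h := E1 k
        rw [sw_left, sw_out hki hk1, sw_out hk1 hk2] at h
        exact trio hn hlk_ne h
  by_cases hi1 : i = j + 1
  · -- adjacent case i = j+1 : contradiction since k ≠ i
    exfalso
    subst hi1
    by_cases hk1 : k = j
    · subst hk1
      -- now the old j is renamed to k
      have h := E1 k
      rw [sw_left, sw_out (ne1 hn k) (ne2 hn k), sw_left] at h
      -- h : sw l (k+1) = k+1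
      rcases sw_eval h with ⟨h1, h2⟩ | ⟨h1, h2⟩ | ⟨h1, h2, h3⟩
      · rw [← h1] at h2; exact pone hn (k + 1) h2.symm
      · rw [← h2] at h1; exact pone hn (k + 1) h1.symm
      · -- sw l fixes k+1 ; evaluate at k+1
        have h' := E1 (k + 1)
        rw [sw_right, sw_left, sw_out (ptwo hn k) (pone hn (k + 1))] at h'
        -- h' : sw l k = k+1+1
        rcases sw_eval h' with ⟨h1', h2'⟩ | ⟨h1', h2'⟩ | ⟨h1', h2', h3'⟩
        · rw [← h1'] at h2'; exact pone hn (k + 1) h2'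
        · rw [← h2'] at h1'; exact pthree hn k h1'.symm
        · exact ptwo hn k h3'
    · by_cases hk2 : k = j + 1 + 1
      · subst hk2
        have h := E1 (j + 1 + 1)
        rw [sw_left, sw_right, sw_right] at h
        -- h : sw l (j+1+1+1) = j
        rcases sw_eval h with ⟨h1, h2⟩ | ⟨h1, h2⟩ | ⟨h1, h2, h3⟩
        · rw [← h1] at h2; exact pfour hn j h2.symm
        · rw [← h2] at h1; exact ptwo hn (j + 1) h1
        · exact pthree hn j h3.symm
      · have h := E1 k
        rw [sw_left, sw_out hki hk2, sw_out hk1 hki] at h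
        exact trio hn hlk_ne h
  · -- nonadjacent case
    by_cases hk1 : k = i + 1
    · exfalso
      subst hk1
      have h := E1 (i + 1)
      rw [sw_left, sw_right, sw_out hij hi1] at h
      rcases sw_eval h with ⟨h1, h2⟩ | ⟨h1, h2⟩ | ⟨h1, h2, h3⟩
      · rw [← h1] at h2; exact pthree hn i h2.symm
      · rw [← h2] at h1; exact pone hn (i + 1) h1
      · exact ptwo hn i h3.symm
    · by_cases hk2 : k = j
      · rw [hk2] at E1
        have h := E1 i
        rw [sw_out hij hi1, sw_left,
          sw_out (fun h' => hj1 h'.symm) (fun h' => hij (add_right_cancel h'))] at h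
        -- h : sw l i = i + 1
        rcases sw_eval h with ⟨h1, h2⟩ | ⟨h1, h2⟩ | ⟨h1, h2, h3⟩
        · exact Or.inr ⟨h1.symm, hk2, hj1, hi1⟩
        · exfalso; rw [← h2] at h1; exact ptwo hn i h1.symm
        · exact absurd h3 (pone hn i)
      · by_cases hk3 : k = j + 1
        · exfalso
          subst hk3
          have h := E1 (j + 1)
          rw [sw_left,
            sw_out (fun h' => hi1 h'.symm) (fun h' => hij (add_right_cancel h').symm),
            sw_right] at h
          rcases sw_eval h with ⟨h1, h2⟩ | ⟨h1, h2⟩ | ⟨h1, h2, h3⟩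
          · rw [← h1] at h2; exact pthree hn j h2.symm
          · rw [← h2] at h1; exact pone hn (j + 1) h1
          · exact ptwo hn j h3.symm
        · exfalso
          have h := E1 k
          rw [sw_left, sw_out hki hk1, sw_out hk2 hk3] at h
          exact trio hn hlk_ne h

end ML

section Graph
variable [NeZero n]

def SS (n : ℕ) [NeZero n] : Set (Equiv.Perm (Fin n)) := {s | ∃ i, s = sw i}

lemma rearr {G : Type*} [Group G] {a b p q : G} (hp : p * p = 1) (hb : b * b = 1)
    (h : a * p = b * q) : b * a = q * p := by
  have h1 : a = b * q * p := by rw [← h, mul_assoc, hp, mul_one]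
  rw [h1, ← mul_assoc, ← mul_assoc, hb, one_mul]

lemma mem_graphAut {V : Type*} {G : SimpleGraph V} {f : Equiv.Perm V} :
    f ∈ graphAut G ↔ ∀ x y, G.Adj (f x) (f y) ↔ G.Adj x y := Iff.rfl

lemma cay_adj (hn : 5 ≤ n) {x y : Equiv.Perm (Fin n)} :
    (Cay n (SS n)).Adj x y ↔ ∃ c, y = sw c * x := by
  rw [Cay, SimpleGraph.fromRel_adj]
  constructor
  · rintro ⟨hne, ⟨c, hc⟩ | ⟨c, hc⟩⟩
    · exact ⟨c, by rw [← hc]; group⟩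
    · refine ⟨c, ?_⟩
      have hx : x = sw c * y := by rw [← hc]; group
      rw [hx, ← mul_assoc, sw_mul_self, one_mul]
  · rintro ⟨c, rfl⟩
    refine ⟨fun h => sw_ne_one hn c ?_, Or.inl ⟨c, by group⟩⟩
    have h1 : (1 : Equiv.Perm (Fin n)) * x = sw c * x := by simpa using h
    exact (mul_right_cancel h1).symm

lemma cay_adj' (hn : 5 ≤ n) {x y : Equiv.Perm (Fin n)} :
    (Cay n (SS n)).Adj x y ↔ ∃ c, x = sw c * y := by
  rw [SimpleGraph.adj_comm]; exact cay_adj hn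

lemma trans_adj (hn : 5 ≤ n) {p q : Fin n} :
    (TransGraph n (SS n)).Adj p q ↔ (q = p + 1 ∨ p = q + 1) := by
  rw [TransGraph, SimpleGraph.fromRel_adj]
  constructor
  · rintro ⟨hne, hm | hm⟩
    · rcases hm with ⟨c, hc⟩
      rcases swap_eq hne hc with ⟨h1, h2⟩ | ⟨h1, h2⟩
      · left; rw [h2, h1]
      · right; rw [h1, h2]
    · rcases hm with ⟨c, hc⟩
      rcases swap_eq (Ne.symm hne) hc with ⟨h1, h2⟩ | ⟨h1, h2⟩
      · right; rw [h2, h1]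
      · left; rw [h1, h2]
  · rintro (rfl | rfl)
    · exact ⟨ne1 hn p, Or.inl ⟨p, rfl⟩⟩
    · exact ⟨(ne1 hn q).symm, Or.inl ⟨q, Equiv.swap_comm _ _⟩⟩

/-- classification of common neighbours of `sw p` and `sw q`. -/
lemma common_nbr (hn : 5 ≤ n) {p q : Fin n} (hpq : p ≠ q) {z : Equiv.Perm (Fin n)}
    (h1 : (Cay n (SS n)).Adj (sw p) z) (h2 : (Cay n (SS n)).Adj (sw q) z) :
    z = 1 ∨ (z = sw q * sw p ∧ q ≠ p + 1 ∧ p ≠ q + 1) := by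
  rcases (cay_adj hn).mp h1 with ⟨a, ha⟩
  rcases (cay_adj hn).mp h2 with ⟨b, hb⟩
  have h : sw a * sw p = sw b * sw q := ha.symm.trans hb
  have E : sw b * sw a = sw q * sw p := rearr (sw_mul_self p) (sw_mul_self b) h
  rcases ML hn hpq E with ⟨hbq, hap⟩ | ⟨hbp, haq, hnadj1, hnadj2⟩
  · left; rw [ha, hap, sw_mul_self]
  · right; exact ⟨by rw [ha, haq], hnadj1, hnadj2⟩

/-- `1` is a common neighbour of `sw p` and anything `sw q`. -/
lemma one_adj_sw (hn : 5 ≤ n) (p : Fin n) : (Cay n (SS n)).Adj (sw p) 1 :=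
  (cay_adj hn).mpr ⟨p, (sw_mul_self p).symm⟩

/-- disjoint adjacent-transpositions commute -/
lemma sw_comm (hn : 5 ≤ n) {p q : Fin n} (hpq : p ≠ q) (h1 : q ≠ p + 1) (h2 : p ≠ q + 1) :
    sw q * sw p = sw p * sw q := by
  have hp1q : p + 1 ≠ q := fun h => h1 h.symm
  have hq1p : q + 1 ≠ p := fun h => h2 h.symm
  have hp1q1 : p + 1 ≠ q + 1 := fun h => hpq (add_right_cancel h)
  apply Equiv.ext
  intro x
  simp only [Equiv.Perm.mul_apply]
  rcases eq_or_ne x p with rfl | hxp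
  · rw [sw_left, sw_out hp1q hp1q1, sw_out hpq h2, sw_left]
  rcases eq_or_ne x (p + 1) with rfl | hxp1
  · rw [sw_right, sw_out hpq h2, sw_out hp1q hp1q1, sw_right]
  rcases eq_or_ne x q with rfl | hxq
  · rw [sw_out (fun h => hpq h.symm) h1, sw_left, sw_out hq1p (fun h => hp1q1 h.symm)]
  rcases eq_or_ne x (q + 1) with rfl | hxq1
  · rw [sw_out hq1p (fun h => hp1q1 h.symm), sw_right, sw_out (fun h => hpq h.symm) h1]
  · rw [sw_out hxp hxp1, sw_out hxq hxq1, sw_out hxp hxp1]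

/-- if `p, q` non-adjacent then `sw q * sw p` is a common neighbour. -/
lemma prod_adj (hn : 5 ≤ n) {p q : Fin n} (hpq : p ≠ q) (h1 : q ≠ p + 1) (h2 : p ≠ q + 1) :
    (Cay n (SS n)).Adj (sw p) (sw q * sw p) ∧ (Cay n (SS n)).Adj (sw q) (sw q * sw p) := by
  constructor
  · exact (cay_adj hn).mpr ⟨q, rfl⟩
  · exact (cay_adj hn).mpr ⟨p, by rw [sw_comm hn hpq h1 h2]⟩

end Graph

section Count
variable [NeZero n]

lemma rho_mem (hn : 5 ≤ n) (a : Equiv.Perm (Fin n)) :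
    (Equiv.mulRight a : Equiv.Perm (Equiv.Perm (Fin n))) ∈ graphAut (Cay n (SS n)) := by
  rw [mem_graphAut]
  intro x y
  rw [cay_adj hn, cay_adj hn]
  simp only [Equiv.coe_mulRight]
  constructor
  · rintro ⟨c, hc⟩
    exact ⟨c, mul_right_cancel (b := a) (by rw [hc, mul_assoc])⟩
  · rintro ⟨c, rfl⟩
    exact ⟨c, by rw [mul_assoc]⟩

/-- the stabilizer of `1` in the automorphism group of the Cayley graph -/
def stab (n : ℕ) [NeZero n] : Subgroup (Equiv.Perm (Equiv.Perm (Fin n))) where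
  carrier := {f | f ∈ graphAut (Cay n (SS n)) ∧ f 1 = 1}
  one_mem' := ⟨one_mem _, rfl⟩
  mul_mem' := fun {a b} ha hb => ⟨mul_mem ha.1 hb.1, by
    simp only [Equiv.Perm.mul_apply, hb.2, ha.2]⟩
  inv_mem' := fun {a} ha => ⟨inv_mem ha.1, by
    rw [Equiv.Perm.inv_eq_iff_eq]; exact ha.2.symm⟩

lemma mem_stab {f : Equiv.Perm (Equiv.Perm (Fin n))} :
    f ∈ stab n ↔ f ∈ graphAut (Cay n (SS n)) ∧ f 1 = 1 := Iff.rfl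

/-- orbit-stabilizer bijection -/
noncomputable def autEquiv (hn : 5 ≤ n) :
    ↥(graphAut (Cay n (SS n))) ≃ Equiv.Perm (Fin n) × ↥(stab n) where
  toFun f := ⟨f.1 1, ⟨(Equiv.mulRight (f.1 1))⁻¹ * f.1,
    mul_mem (inv_mem (rho_mem hn _)) f.2, by
      simp only [Equiv.Perm.mul_apply, Equiv.Perm.inv_def, Equiv.mulRight_symm,
        Equiv.coe_mulRight]
      exact mul_inv_cancel (f.1 1)⟩⟩
  invFun p := ⟨Equiv.mulRight p.1 * p.2.1, mul_mem (rho_mem hn _) p.2.2.1⟩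
  left_inv f := by
    apply Subtype.ext
    exact mul_inv_cancel_left _ _
  right_inv p := by
    rcases p with ⟨a, g, hg⟩
    have h1 : (Equiv.mulRight a * g) 1 = a := by
      simp only [Equiv.Perm.mul_apply, hg.2, Equiv.coe_mulRight, one_mul]
    refine Prod.ext ?_ (Subtype.ext ?_)
    · exact h1
    · simp only [h1]
      exact inv_mul_cancel_left _ _

lemma card_aut_split (hn : 5 ≤ n) :
    Nat.card ↥(graphAut (Cay n (SS n))) = Nat.factorial n * Nat.card ↥(stab n) := by
  rw [Nat.card_congr (autEquiv hn), Nat.card_prod]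
  congr 1
  rw [Nat.card_eq_fintype_card, Fintype.card_perm, Fintype.card_fin]

end Count

section Cycle
variable [NeZero n]

/-- rigidity: an automorphism of the cycle is determined by its values at 0 and 1 -/
lemma cycle_rigid (hn : 5 ≤ n) {f g : Equiv.Perm (Fin n)}
    (hf : f ∈ graphAut (TransGraph n (SS n))) (hg : g ∈ graphAut (TransGraph n (SS n)))
    (h0 : f 0 = g 0) (h1 : f 1 = g 1) : f = g := by
  have step : ∀ (e : Equiv.Perm (Fin n)), e ∈ graphAut (TransGraph n (SS n)) → ∀ p : Fin n,
      e (p + 1 + 1) = e (p + 1) + 1 ∨ e (p + 1) = e (p + 1 + 1) + 1 := by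
    intro e he p
    have hadj : (TransGraph n (SS n)).Adj (p + 1) (p + 1 + 1) := (trans_adj hn).mpr (Or.inl rfl)
    exact (trans_adj hn).mp ((he _ _).mpr hadj)
  have step0 : ∀ (e : Equiv.Perm (Fin n)), e ∈ graphAut (TransGraph n (SS n)) → ∀ p : Fin n,
      e (p + 1) = e p + 1 ∨ e p = e (p + 1) + 1 := by
    intro e he p
    have hadj : (TransGraph n (SS n)).Adj p (p + 1) := (trans_adj hn).mpr (Or.inl rfl)
    exact (trans_adj hn).mp ((he _ _).mpr hadj)
  have key : ∀ m : ℕ, f ((m : ℕ) : Fin n) = g ((m : ℕ) : Fin n) ∧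
      f (((m + 1 : ℕ)) : Fin n) = g (((m + 1 : ℕ)) : Fin n) := by
    intro m
    induction m with
    | zero => constructor <;> simpa using (by first | exact h0 | exact h1)
    | succ m ih =>
      refine ⟨ih.2, ?_⟩
      set p : Fin n := ((m : ℕ) : Fin n) with hp
      have hq : ((m + 1 : ℕ) : Fin n) = p + 1 := by push_cast; ring
      have hr : ((m + 1 + 1 : ℕ) : Fin n) = p + 1 + 1 := by push_cast; ring
      rw [hr]
      have ihp : f p = g p := ih.1
      have ihq : f (p + 1) = g (p + 1) := by rw [← hq]; exact ih.2
      have hfrp : f (p + 1 + 1) ≠ f p := fun h => ptwo hn p (f.injective h)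
      have hgrp : g (p + 1 + 1) ≠ g p := fun h => ptwo hn p (g.injective h)
      rcases step0 f hf p with hA | hB
      · have hA' : g (p + 1) = g p + 1 := by rw [← ihq, ← ihp]; exact hA
        have hfr : f (p + 1 + 1) = f (p + 1) + 1 := by
          rcases step f hf p with h | h
          · exact h
          · exfalso; apply hfrp
            have h2 := hA.symm.trans h
            exact (add_right_cancel h2).symm
        have hgr : g (p + 1 + 1) = g (p + 1) + 1 := by
          rcases step g hg p with h | h
          · exact h
          · exfalso; apply hgrp
            have h2 := hA'.symm.trans h
            exact (add_right_cancel h2).symm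
        rw [hfr, hgr, ihq]
      · have hB' : g p = g (p + 1) + 1 := by rw [← ihq, ← ihp]; exact hB
        have hfr : f (p + 1) = f (p + 1 + 1) + 1 := by
          rcases step f hf p with h | h
          · exfalso; apply hfrp; rw [h, ← hB]
          · exact h
        have hgr : g (p + 1) = g (p + 1 + 1) + 1 := by
          rcases step g hg p with h | h
          · exfalso; apply hgrp; rw [h, ← hB']
          · exact h
        have hfin : f (p + 1 + 1) + 1 = g (p + 1 + 1) + 1 := by rw [← hfr, ← hgr, ihq]
        exact add_right_cancel hfin
  apply Equiv.ext
  intro x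
  have := (key x.val).1
  rwa [Fin.cast_val_eq_self] at this

lemma rot_mem (hn : 5 ≤ n) (a : Fin n) :
    (Equiv.addRight a : Equiv.Perm (Fin n)) ∈ graphAut (TransGraph n (SS n)) := by
  rw [mem_graphAut]
  intro x y
  rw [trans_adj hn, trans_adj hn]
  simp only [Equiv.coe_addRight]
  constructor
  · rintro (h | h)
    · left; have h2 : y + a = (x + 1) + a := by rw [h]; ring
      exact add_right_cancel h2
    · right; have h2 : x + a = (y + 1) + a := by rw [h]; ring
      exact add_right_cancel h2
  · rintro (rfl | rfl)
    · left; ring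
    · right; ring

lemma refl_mem (hn : 5 ≤ n) (a : Fin n) :
    (Equiv.subLeft a : Equiv.Perm (Fin n)) ∈ graphAut (TransGraph n (SS n)) := by
  rw [mem_graphAut]
  intro x y
  rw [trans_adj hn, trans_adj hn]
  simp only [Equiv.subLeft_apply]
  constructor
  · rintro (h | h)
    · right; linear_combination h
    · left; linear_combination h
  · rintro (rfl | rfl)
    · right; ring
    · left; ring

/-- the automorphism group of the cycle has 2n elements -/
noncomputable def cycleAutEquiv (hn : 5 ≤ n) :
    ↥(graphAut (TransGraph n (SS n))) ≃ Fin n × Bool where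
  toFun f := ⟨f.1 0, decide (f.1 1 = f.1 0 + 1)⟩
  invFun p := if p.2 then ⟨Equiv.addRight p.1, rot_mem hn p.1⟩
    else ⟨Equiv.subLeft p.1, refl_mem hn p.1⟩
  left_inv f := by
    apply Subtype.ext
    dsimp only
    by_cases hd : f.1 1 = f.1 0 + 1
    · rw [if_pos (by simp only [decide_eq_true_eq]; exact hd)]
      have h0' : (Equiv.addRight (f.1 0) : Equiv.Perm (Fin n)) 0 = f.1 0 := by simp
      have h1' : (Equiv.addRight (f.1 0) : Equiv.Perm (Fin n)) 1 = f.1 1 := by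
        simp only [Equiv.coe_addRight, hd]; ring
      exact cycle_rigid hn (rot_mem hn (f.1 0)) f.2 h0' h1'
    · rw [if_neg (by simp only [decide_eq_true_eq]; exact hd)]
      have hadj : (TransGraph n (SS n)).Adj (f.1 0) (f.1 1) := by
        refine (f.2 0 1).mpr ((trans_adj hn).mpr (Or.inl (by ring)))
      rcases (trans_adj hn).mp hadj with h | h
      · exact absurd h hd
      · have h0' : (Equiv.subLeft (f.1 0) : Equiv.Perm (Fin n)) 0 = f.1 0 := by simp
        have h1' : (Equiv.subLeft (f.1 0) : Equiv.Perm (Fin n)) 1 = f.1 1 := by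
          simp only [Equiv.subLeft_apply]; linear_combination h
        exact cycle_rigid hn (refl_mem hn (f.1 0)) f.2 h0' h1'
  right_inv := by
    rintro ⟨a, b⟩
    dsimp only
    cases b
    · rw [if_neg Bool.false_ne_true]
      refine Prod.ext ?_ ?_
      · simp [Equiv.subLeft_apply]
      · show decide ((Equiv.subLeft a) 1 = (Equiv.subLeft a) 0 + 1) = false
        apply decide_eq_false
        simp only [Equiv.subLeft_apply]
        intro h
        have h2 : a - 1 + 1 = a - 0 + 1 + 1 := by rw [h]
        simp only [sub_add_cancel, sub_zero] at h2
        exact ptwo hn a h2.symm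
    · rw [if_pos rfl]
      refine Prod.ext ?_ ?_
      · simp [Equiv.coe_addRight]
      · show decide ((Equiv.addRight a) 1 = (Equiv.addRight a) 0 + 1) = true
        apply decide_eq_true
        simp only [Equiv.coe_addRight]
        ring

lemma card_cycleAut (hn : 5 ≤ n) :
    Nat.card ↥(graphAut (TransGraph n (SS n))) = 2 * n := by
  rw [Nat.card_congr (cycleAutEquiv hn), Nat.card_prod, Nat.card_eq_fintype_card,
    Fintype.card_fin, Nat.card_eq_fintype_card, Fintype.card_bool]
  ring

end Cycle

section Kernel
variable [NeZero n]

/-- `sw i` is the unique common neighbour of `sw (i+1) * sw i` and `sw (i+1+1) * sw i`. -/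
lemma CN_unique (hn : 5 ≤ n) {i : Fin n} {z : Equiv.Perm (Fin n)}
    (h1 : (Cay n (SS n)).Adj (sw (i + 1) * sw i) z)
    (h2 : (Cay n (SS n)).Adj (sw (i + 1 + 1) * sw i) z) : z = sw i := by
  rcases (cay_adj hn).mp h1 with ⟨u, hu⟩
  rcases (cay_adj hn).mp h2 with ⟨v, hv⟩
  have h : sw u * sw (i + 1) = sw v * sw (i + 1 + 1) := by
    have h' : sw u * sw (i + 1) * sw i = sw v * sw (i + 1 + 1) * sw i := by
      rw [mul_assoc, mul_assoc, ← hu, ← hv]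
    exact mul_right_cancel h'
  have E : sw v * sw u = sw (i + 1 + 1) * sw (i + 1) :=
    rearr (sw_mul_self (i + 1)) (sw_mul_self v) h
  rcases ML hn (ne1 hn (i + 1)) E with ⟨hv', hu'⟩ | ⟨hv', hu', hna, _⟩
  · rw [hu, hu', ← mul_assoc, sw_mul_self, one_mul]
  · exact absurd rfl hna

lemma prod_ne_one (hn : 5 ≤ n) {a b : Fin n} (hab : a ≠ b) : sw a * sw b ≠ 1 := by
  intro hz
  have h2 : sw a = sw b := by
    have h3 := congrArg (· * sw b) hz
    simpa [mul_assoc, sw_mul_self] using h3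
  exact hab (sw_inj hn h2)

/-- an automorphism fixing `1` and all of `S` pointwise fixes the second shell. -/
lemma kernel_fix (hn : 5 ≤ n) {h : Equiv.Perm (Equiv.Perm (Fin n))}
    (hmem : h ∈ graphAut (Cay n (SS n))) (h1 : h 1 = 1) (hS : ∀ i, h (sw i) = sw i) :
    ∀ a b : Fin n, h (sw a * sw b) = sw a * sw b := by
  have hinj : Function.Injective h := h.injective
  have fixne : ∀ z : Equiv.Perm (Fin n), z ≠ 1 → h z ≠ 1 :=
    fun z hz he => hz (hinj (he.trans h1.symm))
  have fix_nonadj : ∀ a b : Fin n, a ≠ b → a ≠ b + 1 → b ≠ a + 1 →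
      h (sw a * sw b) = sw a * sw b := by
    intro a b hab hab1 hba1
    have hadj := prod_adj hn (p := b) (q := a) (fun e => hab e.symm) hab1 hba1
    have hz1 : (Cay n (SS n)).Adj (sw b) (h (sw a * sw b)) := by
      have h2 := (hmem (sw b) (sw a * sw b)).mpr hadj.1
      rwa [hS b] at h2
    have hz2 : (Cay n (SS n)).Adj (sw a) (h (sw a * sw b)) := by
      have h2 := (hmem (sw a) (sw a * sw b)).mpr hadj.2
      rwa [hS a] at h2
    rcases common_nbr hn (fun e => hab e.symm) hz1 hz2 with he | ⟨he, _, _⟩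
    · exact absurd he (fixne _ (prod_ne_one hn hab))
    · exact he
  -- case x : descending adjacent product
  have case_x : ∀ i : Fin n, h (sw (i + 1) * sw i) = sw (i + 1) * sw i := by
    intro i
    have hyfix : h (sw (i + 1 + 1) * sw i) = sw (i + 1 + 1) * sw i :=
      fix_nonadj _ _ (ptwo hn i) (fun e => pone hn (i + 1) e) (ne3 hn i)
    have hadjx : (Cay n (SS n)).Adj (sw i) (sw (i + 1) * sw i) :=
      (cay_adj hn).mpr ⟨i + 1, rfl⟩
    have hhx : (Cay n (SS n)).Adj (sw i) (h (sw (i + 1) * sw i)) := by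
      have h2 := (hmem (sw i) (sw (i + 1) * sw i)).mpr hadjx
      rwa [hS i] at h2
    rcases (cay_adj hn).mp hhx with ⟨c, hc⟩
    have hxne1 : sw (i + 1) * sw i ≠ 1 := prod_ne_one hn (fun e => pone hn i e)
    have hcne : c ≠ i := by
      intro hci
      exact fixne _ hxne1 (by rw [hc, hci, sw_mul_self])
    by_cases hc1 : c = i + 1
    · rw [hc, hc1]
    by_cases hc2 : i = c + 1
    · exfalso
      subst hc2
      -- h x = sw c * sw (c+1), where x = sw (c+1+1) * sw (c+1)
      have hcomm : sw (c + 1 + 1 + 1) * sw c = sw c * sw (c + 1 + 1 + 1) :=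
        sw_comm hn (ne3 hn c) (ptwo hn (c + 1)) (ne4 hn c)
      have hwy : sw (c + 1 + 1 + 1) * (sw c * sw (c + 1)) =
          sw c * (sw (c + 1 + 1 + 1) * sw (c + 1)) := by
        rw [← mul_assoc, hcomm, mul_assoc]
      set w : Equiv.Perm (Fin n) := sw (c + 1 + 1 + 1) * (sw c * sw (c + 1)) with hw
      have hz'w : h (h.symm w) = w := h.apply_symm_apply w
      have hxz : (Cay n (SS n)).Adj (sw (c + 1 + 1) * sw (c + 1)) (h.symm w) := by
        refine (hmem _ _).mp ?_
        rw [hz'w, hc]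
        exact (cay_adj hn).mpr ⟨c + 1 + 1 + 1, hw⟩
      have hyz : (Cay n (SS n)).Adj (sw (c + 1 + 1 + 1) * sw (c + 1)) (h.symm w) := by
        refine (hmem _ _).mp ?_
        rw [hz'w, hyfix]
        exact (cay_adj hn).mpr ⟨c, hwy⟩
      have hz' : h.symm w = sw (c + 1) := CN_unique hn hxz hyz
      have hwsw : w = sw (c + 1) := by rw [← hz'w, hz', hS]
      have hfin : sw (c + 1 + 1 + 1) * sw c = 1 := by
        have h2 : sw (c + 1 + 1 + 1) * sw c * sw (c + 1) = 1 * sw (c + 1) := by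
          rw [one_mul, mul_assoc, ← hw, hwsw]
        exact mul_right_cancel h2
      have h3 : sw (c + 1 + 1 + 1) = sw c := by
        rw [eq_inv_of_mul_eq_one_left hfin, sw_inv]
      exact pthree hn c (sw_inj hn h3)
    · exfalso
      have hfix : h (sw c * sw i) = sw c * sw i := fix_nonadj c i hcne hc1 hc2
      have h2 : sw (i + 1) * sw i = sw c * sw i := hinj (hc.trans hfix.symm)
      exact hc1 (sw_inj hn (mul_right_cancel h2)).symm
  -- case x' : ascending adjacent product
  have case_x' : ∀ a : Fin n, h (sw a * sw (a + 1)) = sw a * sw (a + 1) := by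
    intro a
    have hyfix : h (sw (a + 1 + 1 + 1) * sw (a + 1)) = sw (a + 1 + 1 + 1) * sw (a + 1) :=
      fix_nonadj _ _ (ptwo hn (a + 1)) (fun e => pone hn (a + 1 + 1) e) (ne3 hn (a + 1))
    have hadjx : (Cay n (SS n)).Adj (sw (a + 1)) (sw a * sw (a + 1)) :=
      (cay_adj hn).mpr ⟨a, rfl⟩
    have hhx : (Cay n (SS n)).Adj (sw (a + 1)) (h (sw a * sw (a + 1))) := by
      have h2 := (hmem (sw (a + 1)) (sw a * sw (a + 1))).mpr hadjx
      rwa [hS (a + 1)] at h2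
    rcases (cay_adj hn).mp hhx with ⟨c, hc⟩
    have hxne1 : sw a * sw (a + 1) ≠ 1 := prod_ne_one hn (ne1 hn a)
    have hcne : c ≠ a + 1 := by
      intro hci
      exact fixne _ hxne1 (by rw [hc, hci, sw_mul_self])
    by_cases hc1 : c = a
    · rw [hc, hc1]
    by_cases hc2 : c = a + 1 + 1
    · exfalso
      subst hc2
      -- h x' = sw (a+1+1) * sw (a+1) : the x-shape with i := a+1
      have hcomm : sw (a + 1 + 1 + 1) * sw a = sw a * sw (a + 1 + 1 + 1) :=
        sw_comm hn (ne3 hn a) (ptwo hn (a + 1)) (ne4 hn a)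
      have hwy : sw (a + 1 + 1 + 1) * (sw a * sw (a + 1)) =
          sw a * (sw (a + 1 + 1 + 1) * sw (a + 1)) := by
        rw [← mul_assoc, hcomm, mul_assoc]
      set w : Equiv.Perm (Fin n) := sw (a + 1 + 1 + 1) * (sw a * sw (a + 1)) with hw
      -- w is a common neighbour of x' and y
      have hadjx'w : (Cay n (SS n)).Adj (sw a * sw (a + 1)) w :=
        (cay_adj hn).mpr ⟨a + 1 + 1 + 1, hw⟩
      have hadjyw : (Cay n (SS n)).Adj (sw (a + 1 + 1 + 1) * sw (a + 1)) w :=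
        (cay_adj hn).mpr ⟨a, hwy⟩
      -- transport: h w is a common neighbour of h x' and y
      have hxz : (Cay n (SS n)).Adj (sw (a + 1 + 1) * sw (a + 1)) (h w) := by
        rw [← hc]
        exact (hmem _ _).mpr hadjx'w
      have hyz : (Cay n (SS n)).Adj (sw (a + 1 + 1 + 1) * sw (a + 1)) (h w) := by
        have h2 := (hmem _ _).mpr hadjyw
        rwa [hyfix] at h2
      have hz' : h w = sw (a + 1) := CN_unique hn hxz hyz
      have hwsw : w = sw (a + 1) := hinj (by rw [hz', hS])
      have hfin : sw (a + 1 + 1 + 1) * sw a = 1 := by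
        have h2 : sw (a + 1 + 1 + 1) * sw a * sw (a + 1) = 1 * sw (a + 1) := by
          rw [one_mul, mul_assoc, ← hw, hwsw]
        exact mul_right_cancel h2
      have h3 : sw (a + 1 + 1 + 1) = sw a := by
        rw [eq_inv_of_mul_eq_one_left hfin, sw_inv]
      exact pthree hn a (sw_inj hn h3)
    · exfalso
      have hfix : h (sw c * sw (a + 1)) = sw c * sw (a + 1) := by
        refine fix_nonadj c (a + 1) hcne hc2 ?_
        intro he
        exact hc1 (add_right_cancel he).symm
      have h2 : sw a * sw (a + 1) = sw c * sw (a + 1) := hinj (hc.trans hfix.symm)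
      exact hc1 (sw_inj hn (mul_right_cancel h2)).symm
  -- main case split
  intro a b
  by_cases hab : a = b
  · subst hab; rw [sw_mul_self, h1]
  by_cases hba : a = b + 1
  · subst hba; exact case_x b
  by_cases hab1 : b = a + 1
  · subst hab1; exact case_x' a
  · exact fix_nonadj a b hab hba hab1

lemma swap_mem_closure (hn : 5 ≤ n) : ∀ (m : ℕ) (x : Fin n),
    Equiv.swap x (x + (m : Fin n)) ∈ Subgroup.closure (SS n) := by
  intro m
  induction m with
  | zero =>
    intro x
    have h0 : Equiv.swap x (x + ((0 : ℕ) : Fin n)) = 1 := by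
      simp [Equiv.swap_self]
      rfl
    rw [h0]; exact one_mem _
  | succ m ih =>
    intro x
    have hc : ((m + 1 : ℕ) : Fin n) = (m : Fin n) + 1 := by push_cast; ring
    rw [hc, ← add_assoc]
    by_cases h0 : x + (m : Fin n) = x
    · rw [h0]
      exact Subgroup.subset_closure ⟨x, rfl⟩
    · by_cases h1 : x + (m : Fin n) + 1 = x
      · rw [h1]
        have h2 : Equiv.swap x x = (1 : Equiv.Perm (Fin n)) := by
          simp [Equiv.swap_self]; rfl
        rw [h2]; exact one_mem _
      · have hx : (sw (x + (m : Fin n))) x = x :=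
          sw_out (fun e => h0 e.symm) (fun e => h1 e.symm)
        have hxd : (sw (x + (m : Fin n))) (x + (m : Fin n)) = x + (m : Fin n) + 1 := sw_left _
        have key := Equiv.swap_apply_apply (sw (x + (m : Fin n))) x (x + (m : Fin n))
        rw [hx, hxd, sw_inv] at key
        rw [key]
        exact mul_mem (mul_mem (Subgroup.subset_closure ⟨x + (m : Fin n), rfl⟩) (ih x))
          (Subgroup.subset_closure ⟨x + (m : Fin n), rfl⟩)

lemma closure_SS (hn : 5 ≤ n) : Subgroup.closure (SS n) = ⊤ := by
  rw [eq_top_iff, ← Equiv.Perm.closure_isSwap]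
  refine (Subgroup.closure_le _).mpr ?_
  rintro s ⟨x, y, hxy, rfl⟩
  have h2 : y = x + (((y - x).val : ℕ) : Fin n) := by
    rw [Fin.cast_val_eq_self]; ring
  rw [h2]
  exact swap_mem_closure hn _ x

lemma translate (hn : 5 ≤ n) {h : Equiv.Perm (Equiv.Perm (Fin n))}
    (hmem : h ∈ graphAut (Cay n (SS n))) {y : Equiv.Perm (Fin n)}
    (hy1 : h y = y) (hy2 : ∀ w, h (sw w * y) = sw w * y) :
    ∀ a b : Fin n, h (sw a * sw b * y) = sw a * sw b * y := by
  set H : Equiv.Perm (Equiv.Perm (Fin n)) := Equiv.mulRight y⁻¹ * h * Equiv.mulRight y with hH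
  have hHmem : H ∈ graphAut (Cay n (SS n)) :=
    mul_mem (mul_mem (rho_mem hn y⁻¹) hmem) (rho_mem hn y)
  have happ : ∀ z, H z = h (z * y) * y⁻¹ := fun z => rfl
  have hH1 : H 1 = 1 := by
    rw [happ, one_mul, hy1]
    simp
  have hHS : ∀ i, H (sw i) = sw i := fun i => by
    rw [happ, hy2 i]
    simp [mul_assoc]
  intro a b
  have hfix := kernel_fix hn hHmem hH1 hHS a b
  rw [happ] at hfix
  have h2 := congrArg (· * y) hfix
  simpa [mul_assoc] using h2

/-- the kernel lemma: an automorphism fixing `1` and all of `S` pointwise is trivial. -/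
lemma kernel_trivial (hn : 5 ≤ n) {h : Equiv.Perm (Equiv.Perm (Fin n))}
    (hmem : h ∈ graphAut (Cay n (SS n))) (h1 : h 1 = 1) (hS : ∀ i, h (sw i) = sw i) :
    h = 1 := by
  have main : ∀ g : Equiv.Perm (Fin n), h g = g ∧ ∀ w, h (sw w * g) = sw w * g := by
    intro g
    have hg : g ∈ Subgroup.closure (SS n) := by rw [closure_SS hn]; trivial
    refine Subgroup.closure_induction_left ?_ ?_ ?_ hg
    · exact ⟨h1, fun w => by rw [mul_one]; exact hS w⟩
    · rintro x ⟨u, rfl⟩ y hy ⟨ihy1, ihy2⟩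
      refine ⟨ihy2 u, fun w => ?_⟩
      have h2 := translate hn hmem ihy1 ihy2 w u
      rwa [mul_assoc] at h2
    · rintro x ⟨u, rfl⟩ y hy ⟨ihy1, ihy2⟩
      rw [sw_inv]
      refine ⟨ihy2 u, fun w => ?_⟩
      have h2 := translate hn hmem ihy1 ihy2 w u
      rwa [mul_assoc] at h2
  apply Equiv.ext
  intro x
  simpa using (main x).1

end Kernel

section Inject
variable [NeZero n]

/-- conjugation by `a` as a permutation of `Perm (Fin n)` -/
def cnj (a : Equiv.Perm (Fin n)) : Equiv.Perm (Equiv.Perm (Fin n)) :=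
  (MulAut.conj a).toEquiv

lemma cnj_apply (a x : Equiv.Perm (Fin n)) : cnj a x = a * x * a⁻¹ := rfl

lemma conj_sw (hn : 5 ≤ n) {a : Equiv.Perm (Fin n)}
    (ha : a ∈ graphAut (TransGraph n (SS n))) (c : Fin n) :
    ∃ d, a * sw c * a⁻¹ = sw d := by
  have key := Equiv.swap_apply_apply a c (c + 1)
  have hadj : (TransGraph n (SS n)).Adj (a c) (a (c + 1)) :=
    (ha c (c + 1)).mpr ((trans_adj hn).mpr (Or.inl rfl))
  rcases (trans_adj hn).mp hadj with hd | hd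
  · refine ⟨a c, ?_⟩
    simp only [sw]
    rw [← hd]
    exact key.symm
  · refine ⟨a (c + 1), ?_⟩
    simp only [sw]
    rw [← hd]
    exact ((Equiv.swap_comm _ _).trans key).symm

lemma cnj_mem_stab (hn : 5 ≤ n) {a : Equiv.Perm (Fin n)}
    (ha : a ∈ graphAut (TransGraph n (SS n))) : cnj a ∈ stab n := by
  have key : ∀ (s x : Equiv.Perm (Fin n)), cnj a ((a⁻¹ * s * a) * x) = s * cnj a x := by
    intro s x
    rw [cnj_apply, cnj_apply]
    group
  constructor
  · rw [mem_graphAut]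
    intro x y
    rw [cay_adj hn, cay_adj hn]
    constructor
    · rintro ⟨c, hc⟩
      rcases conj_sw hn (inv_mem ha) c with ⟨d, hd⟩
      rw [inv_inv] at hd
      refine ⟨d, ?_⟩
      have h2 : cnj a y = cnj a ((a⁻¹ * sw c * a) * x) := by rw [key, ← hc]
      have h3 := (cnj a).injective h2
      rwa [hd] at h3
    · rintro ⟨c, rfl⟩
      rcases conj_sw hn ha c with ⟨d, hd⟩
      refine ⟨d, ?_⟩
      rw [← hd]
      have key2 : cnj a (sw c * x) = (a * sw c * a⁻¹) * cnj a x := by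
        rw [cnj_apply, cnj_apply]; group
      exact key2
  · rw [cnj_apply]
    group

lemma cnj_injective (hn : 5 ≤ n) {a b : Equiv.Perm (Fin n)} (he : cnj a = cnj b) :
    a = b := by
  have hc : ∀ x : Equiv.Perm (Fin n), (b⁻¹ * a) * x * (b⁻¹ * a)⁻¹ = x := by
    intro x
    have h2 : cnj a x = cnj b x := by rw [he]
    rw [cnj_apply, cnj_apply] at h2
    have h3 := congrArg (fun z => b⁻¹ * z * b) h2
    calc (b⁻¹ * a) * x * (b⁻¹ * a)⁻¹ = b⁻¹ * (a * x * a⁻¹) * b := by group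
    _ = b⁻¹ * (b * x * b⁻¹) * b := by rw [h2]
    _ = x := by group
  set c : Equiv.Perm (Fin n) := b⁻¹ * a with hcdef
  have hfix : ∀ p : Fin n, c p = p := by
    intro p
    have mk : ∀ q : Fin n, p ≠ q → (c p = p ∧ c q = q) ∨ (c p = q ∧ c q = p) := by
      intro q hpq
      have h2 := Equiv.swap_apply_apply c p q
      rw [show c * Equiv.swap p q * c⁻¹ = Equiv.swap p q from hc _] at h2
      exact swap_eq (fun e => hpq (c.injective e)) h2
    rcases mk (p + 1) (ne1 hn p) with ⟨e1, _⟩ | ⟨e1, _⟩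
    · exact e1
    · rcases mk (p + 1 + 1) (ne2 hn p) with ⟨e3, _⟩ | ⟨e3, _⟩
      · exact e3
      · exact absurd (e1.symm.trans e3) (fun e => pone hn (p + 1) e.symm)
  have hc1 : c = 1 := Equiv.ext (fun p => hfix p)
  have := hc1
  rw [hcdef] at this
  exact (inv_mul_eq_one.mp this).symm ▸ rfl

lemma stab_maps_sw (hn : 5 ≤ n) {f : Equiv.Perm (Equiv.Perm (Fin n))} (hf : f ∈ stab n)
    (i : Fin n) : ∃ j, f (sw i) = sw j := by
  have hadj : (Cay n (SS n)).Adj 1 (sw i) := (cay_adj hn).mpr ⟨i, (mul_one _).symm⟩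
  have h2 := (hf.1 1 (sw i)).mpr hadj
  rw [hf.2] at h2
  rcases (cay_adj hn).mp h2 with ⟨c, hc⟩
  exact ⟨c, by rw [hc, mul_one]⟩

noncomputable def psi (hn : 5 ≤ n) (f : ↥(stab n)) : Fin n → Fin n :=
  fun i => Classical.choose (stab_maps_sw hn f.2 i)

lemma psi_spec (hn : 5 ≤ n) (f : ↥(stab n)) (i : Fin n) :
    f.1 (sw i) = sw (psi hn f i) := Classical.choose_spec (stab_maps_sw hn f.2 i)

lemma psi_inj (hn : 5 ≤ n) (f : ↥(stab n)) : Function.Injective (psi hn f) := by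
  intro i j hij
  have h2 : f.1 (sw i) = f.1 (sw j) := by rw [psi_spec hn, psi_spec hn, hij]
  exact sw_inj hn (f.1.injective h2)

noncomputable def psiPerm (hn : 5 ≤ n) (f : ↥(stab n)) : Equiv.Perm (Fin n) :=
  Equiv.ofBijective _ (Finite.injective_iff_bijective.mp (psi_inj hn f))

lemma psiPerm_apply (hn : 5 ≤ n) (f : ↥(stab n)) (i : Fin n) :
    psiPerm hn f i = psi hn f i := rfl

lemma nonadj_char (hn : 5 ≤ n) {p q : Fin n} (hpq : p ≠ q) :
    (¬ (q = p + 1 ∨ p = q + 1)) ↔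
      ∃ z, z ≠ 1 ∧ (Cay n (SS n)).Adj (sw p) z ∧ (Cay n (SS n)).Adj (sw q) z := by
  constructor
  · intro hna
    push_neg at hna
    refine ⟨sw q * sw p, ?_, (prod_adj hn hpq hna.1 hna.2).1, (prod_adj hn hpq hna.1 hna.2).2⟩
    exact prod_ne_one hn (fun e => hpq e.symm)
  · rintro ⟨z, hz1, hz2, hz3⟩ hd
    rcases common_nbr hn hpq hz2 hz3 with he | ⟨_, hna1, hna2⟩
    · exact hz1 he
    · rcases hd with h | h
      · exact hna1 h
      · exact hna2 h

lemma psi_mem (hn : 5 ≤ n) (f : ↥(stab n)) :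
    psiPerm hn f ∈ graphAut (TransGraph n (SS n)) := by
  rw [mem_graphAut]
  intro p q
  rcases eq_or_ne p q with rfl | hpq
  · exact iff_of_false ((TransGraph n (SS n)).loopless.irrefl _) ((TransGraph n (SS n)).loopless.irrefl _)
  · have hinj : (psiPerm hn f) p ≠ (psiPerm hn f) q :=
      fun e => hpq ((psiPerm hn f).injective e)
    have hp : sw ((psiPerm hn f) p) = f.1 (sw p) := (psi_spec hn f p).symm
    have hq : sw ((psiPerm hn f) q) = f.1 (sw q) := (psi_spec hn f q).symm
    rw [trans_adj hn, trans_adj hn]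
    have h1 := nonadj_char hn hpq
    have h2 := nonadj_char hn hinj
    have htr : (∃ z, z ≠ 1 ∧ (Cay n (SS n)).Adj (sw ((psiPerm hn f) p)) z ∧
          (Cay n (SS n)).Adj (sw ((psiPerm hn f) q)) z) ↔
        (∃ z, z ≠ 1 ∧ (Cay n (SS n)).Adj (sw p) z ∧ (Cay n (SS n)).Adj (sw q) z) := by
      constructor
      · rintro ⟨z, hz1, hz2, hz3⟩
        refine ⟨f.1⁻¹ z, ?_, ?_, ?_⟩
        · intro he
          apply hz1
          have h3 := congrArg f.1 he
          rwa [Equiv.Perm.inv_def, Equiv.apply_symm_apply, f.2.2] at h3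
        · refine (f.2.1 (sw p) (f.1⁻¹ z)).mp ?_
          rw [Equiv.Perm.inv_def, Equiv.apply_symm_apply, ← hp]
          exact hz2
        · refine (f.2.1 (sw q) (f.1⁻¹ z)).mp ?_
          rw [Equiv.Perm.inv_def, Equiv.apply_symm_apply, ← hq]
          exact hz3
      · rintro ⟨z, hz1, hz2, hz3⟩
        refine ⟨f.1 z, ?_, ?_, ?_⟩
        · intro he
          apply hz1
          have h3 : f.1 z = f.1 1 := by rw [he, f.2.2]
          exact f.1.injective h3
        · rw [hp]; exact (f.2.1 (sw p) z).mpr hz2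
        · rw [hq]; exact (f.2.1 (sw q) z).mpr hz3
    exact not_iff_not.mp (h2.trans (htr.trans h1.symm))

noncomputable def Psi (hn : 5 ≤ n) (f : ↥(stab n)) : ↥(graphAut (TransGraph n (SS n))) :=
  ⟨psiPerm hn f, psi_mem hn f⟩

lemma Psi_injective (hn : 5 ≤ n) : Function.Injective (Psi hn) := by
  intro f g he
  have hv : ∀ i, psi hn f i = psi hn g i := by
    intro i
    have h2 : psiPerm hn f = psiPerm hn g := congrArg Subtype.val he
    have h3 := congrArg (fun (e : Equiv.Perm (Fin n)) => e i) h2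
    simpa [psiPerm_apply] using h3
  have hsw : ∀ i, f.1 (sw i) = g.1 (sw i) := fun i => by
    rw [psi_spec hn f i, psi_spec hn g i, hv i]
  have hk : (g.1⁻¹ * f.1 : Equiv.Perm (Equiv.Perm (Fin n))) = 1 := by
    refine kernel_trivial hn (mul_mem (inv_mem g.2.1) f.2.1) ?_ ?_
    · have h2 : (g.1⁻¹ * f.1) 1 = g.1⁻¹ (f.1 1) := rfl
      rw [h2, f.2.2, Equiv.Perm.inv_eq_iff_eq]
      exact g.2.2.symm
    · intro i
      have h2 : (g.1⁻¹ * f.1) (sw i) = g.1⁻¹ (f.1 (sw i)) := rfl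
      rw [h2, hsw i, Equiv.Perm.inv_def, Equiv.symm_apply_apply]
  exact Subtype.ext (inv_mul_eq_one.mp hk).symm

lemma card_stab (hn : 5 ≤ n) : Nat.card ↥(stab n) = 2 * n := by
  rw [← card_cycleAut hn]
  apply le_antisymm
  · exact Nat.card_le_card_of_injective (Psi hn) (Psi_injective hn)
  · refine Nat.card_le_card_of_injective
      (fun a => (⟨cnj a.1, cnj_mem_stab hn a.2⟩ : ↥(stab n))) ?_
    intro a b he
    have h2 : cnj a.1 = cnj b.1 := congrArg Subtype.val he
    exact Subtype.ext (cnj_injective hn h2)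

end Inject
end MBS


/-- For all `n ≥ 5`, the automorphism group of the modified
bubble-sort graph of dimension `n` has order `2n · n!`. -/
theorem card_aut_modifiedBubbleSort (n : ℕ) (hn : 5 ≤ n) :
    Nat.card
      (graphAut (Cay n
        {s : Equiv.Perm (Fin n) | ∃ i : Fin n, s = Equiv.swap i (i + ⟨1, by omega⟩)})) =
      2 * n * Nat.factorial n := by
  haveI : NeZero n := ⟨by omega⟩
  have hone : (⟨1, by omega⟩ : Fin n) = 1 := by
    apply Fin.ext
    show 1 = (1 : Fin n).val
    open Fin.CommRing in rw [show (1 : Fin n) = ((1 : ℕ) : Fin n) by rw [Nat.cast_one],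
      Fin.val_cast_of_lt (by omega)]
  have hset : {s : Equiv.Perm (Fin n) | ∃ i : Fin n, s = Equiv.swap i (i + ⟨1, by omega⟩)} =
      MBS.SS n := by
    rw [hone]
    rfl
  rw [hset, MBS.card_aut_split hn, MBS.card_stab hn]
  ring
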